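/- arXiv:2010.00107 — 6 statements merged into one kernel-verified Lean document; each statement's English description precedes it below -/
import Mathlib

section
/- Fix n ≥ 2, and regard s_n = s_n(χ), a_n = a_n(χ) = ⟨f_{n+1}, s_n(χ)⟩_S/‖s_n(χ)‖_S² and b̃_n = b̃_n(χ) = ⟨f_{n+1}, s_{n−1}(χ)⟩_S/‖s_{n−1}(χ)‖_S² as functions of the parameter χ > 0. Then lim_{χ→∞} χ·b̃_n(χ) = ‖p_n‖₂²/‖p_{n−2}‖₂² and lim_{χ→∞} χ·a_n(χ) = ⟨f_{n+1}, f_n⟩₂/‖p_{n−1}‖₂². -/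
open Filter RealInnerProductSpace

variable {H : Type*} [NormedAddCommGroup H] [InnerProductSpace ℝ H]

/-- `Wlt P n` is the span of `P 0, …, P (n-1)`; thus `Wlt P 0 = ⊥ = W_{-1}` and
`Wlt P (n+1)` is the space `W_n = span{P_0, …, P_n}`. -/
def Wlt (P : ℕ → H) (n : ℕ) : Submodule ℝ H := Submodule.span ℝ (P '' Set.Iio n)

/-- `Wtot P` is the space `W = ⋃ₙ Wₙ` of all polynomials. -/
def Wtot (P : ℕ → H) : Submodule ℝ H := Submodule.span ℝ (Set.range P)

/-- The Sobolev inner product `⟨f, g⟩_S = ⟨f, g⟩₂ + χ⟨Δf, Δg⟩₂`. -/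
noncomputable def innerS (Δ : H →ₗ[ℝ] H) (χ : ℝ) (f g : H) : ℝ :=
  ⟪ f, g ⟫ + χ * ⟪ Δ f, Δ g ⟫

/-- The Sobolev norm `‖f‖_S = √(‖f‖₂² + χ‖Δf‖₂²)`. -/
noncomputable def normS (Δ : H →ₗ[ℝ] H) (χ : ℝ) (f : H) : ℝ :=
  Real.sqrt (‖f‖ ^ 2 + χ * ‖Δ f‖ ^ 2)

section Aux

variable {P : ℕ → H} {Δ : H →ₗ[ℝ] H}

lemma wlt_mono {a b : ℕ} (h : a ≤ b) : Wlt P a ≤ Wlt P b :=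
  Submodule.span_mono (Set.image_mono fun _ hx => lt_of_lt_of_le hx h)

lemma wlt_le_wtot (m : ℕ) : Wlt P m ≤ Wtot P :=
  Submodule.span_mono (Set.image_subset_range P _)

lemma mem_wlt {j m : ℕ} (h : j < m) : P j ∈ Wlt P m :=
  Submodule.subset_span ⟨j, h, rfl⟩

lemma monic_mem {m : ℕ} {u : H} (h : u - P m ∈ Wlt P m) : u ∈ Wlt P (m + 1) := by
  have hu : u = (u - P m) + P m := by abel
  rw [hu]
  exact add_mem (wlt_mono (Nat.le_succ m) h) (mem_wlt (Nat.lt_succ_self m))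

lemma delta_map (hΔ0 : Δ (P 0) = 0) (hΔsucc : ∀ n, Δ (P (n + 1)) = P n)
    (m : ℕ) {u : H} (hu : u ∈ Wlt P (m + 1)) : Δ u ∈ Wlt P m := by
  induction hu using Submodule.span_induction with
  | mem x hx =>
      obtain ⟨j, hj, rfl⟩ := hx
      have hj' : j < m + 1 := hj
      cases j with
      | zero => rw [hΔ0]; exact zero_mem _
      | succ i => rw [hΔsucc]; exact mem_wlt (by omega)
  | zero => rw [map_zero]; exact zero_mem _
  | add x y _ _ hx hy => rw [map_add]; exact add_mem hx hy
  | smul a x _ hx => rw [map_smul]; exact Submodule.smul_mem _ _ hx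

lemma wlt_decompose {m : ℕ} {u : H} (hu : u ∈ Wlt P (m + 1)) :
    ∃ c : ℝ, ∃ w, w ∈ Wlt P m ∧ u = c • P m + w := by
  have hins : Set.Iio (m + 1) = insert m (Set.Iio m) := by
    ext x; simp only [Set.mem_Iio, Set.mem_insert_iff]; omega
  rw [Wlt, hins, Set.image_insert_eq] at hu
  exact Submodule.mem_span_insert.mp hu

lemma smul_P_notMem (hP : LinearIndependent ℝ P) {m : ℕ} {c : ℝ}
    (h : c • P m ∈ Wlt P m) : c = 0 := by
  by_contra hc
  have h2 := (Wlt P m).smul_mem c⁻¹ h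
  rw [smul_smul, inv_mul_cancel₀ hc, one_smul] at h2
  exact hP.notMem_span_image (by simp) h2

lemma ker_delta (hP : LinearIndependent ℝ P) (hΔ0 : Δ (P 0) = 0)
    (hΔsucc : ∀ n, Δ (P (n + 1)) = P n) :
    ∀ m : ℕ, ∀ u ∈ Wlt P (m + 1), Δ u = 0 → u ∈ Wlt P 1 := by
  intro m
  induction m with
  | zero => exact fun u hu _ => hu
  | succ m ih =>
    intro u hu hΔu
    obtain ⟨c, w, hw, rfl⟩ := wlt_decompose hu
    have hΔw : Δ w ∈ Wlt P m := delta_map hΔ0 hΔsucc m hw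
    have hΔeq : Δ (c • P (m + 1) + w) = c • P m + Δ w := by
      rw [map_add, map_smul, hΔsucc]
    rw [hΔeq] at hΔu
    have hmem : c • P m ∈ Wlt P m := by
      rw [eq_neg_of_add_eq_zero_left hΔu]
      exact neg_mem hΔw
    have hc : c = 0 := smul_P_notMem hP hmem
    subst hc
    simp only [zero_smul, zero_add] at hΔu ⊢
    exact ih w hw hΔu

lemma monic_G (hP : LinearIndependent ℝ P) (hΔ0 : Δ (P 0) = 0)
    (hΔsucc : ∀ n, Δ (P (n + 1)) = P n) {G : H →ₗ[ℝ] H}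
    (hGmap : ∀ n, ∀ u ∈ Wlt P (n + 1), G u ∈ Wlt P (n + 2))
    {m : ℕ} {v : H} (hv : v - P m ∈ Wlt P m) (hGv : Δ (G v) = v) :
    G v - P (m + 1) ∈ Wlt P (m + 1) := by
  obtain ⟨c, w, hw, hEq⟩ := wlt_decompose (hGmap m v (monic_mem hv))
  have hΔw : Δ w ∈ Wlt P m := delta_map hΔ0 hΔsucc m hw
  have h1 : (c - 1) • P m = (v - P m) - Δ w := by
    have h2 : v = c • P m + Δ w := by
      conv_lhs => rw [← hGv, hEq]
      rw [map_add, map_smul, hΔsucc]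
    rw [sub_smul, one_smul, h2]; abel
  have hc : c - 1 = 0 := smul_P_notMem hP (h1 ▸ sub_mem hv hΔw)
  have hc1 : c = 1 := by linarith
  rw [hEq, hc1, one_smul, add_sub_cancel_left]
  exact hw

end Aux

/-- For fixed `n ≥ 2`, `lim_{χ→∞} χ b̃_n(χ) = ‖p_n‖₂²/‖p_{n−2}‖₂²` and `lim_{χ→∞} χ a_n(χ) = ⟨f_{n+1}, f_n⟩₂/‖p_{n−1}‖₂²`. -/
theorem statement13
    (P : ℕ → H) (hP : LinearIndependent ℝ P)
    (Δ G : H →ₗ[ℝ] H)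
    (hΔ0 : Δ (P 0) = 0) (hΔsucc : ∀ n, Δ (P (n + 1)) = P n)
    (hGsym : ∀ u ∈ Wtot P, ∀ v ∈ Wtot P, ⟪ G u, v ⟫ = ⟪ u, G v ⟫)
    (hGinv : ∀ u ∈ Wtot P, Δ (G u) = u)
    (hGmap : ∀ n, ∀ u ∈ Wlt P (n + 1), G u ∈ Wlt P (n + 2))
    (C : ℝ) (hC : 0 < C)
    (hGbound : ∀ u ∈ Wtot P, ‖G u‖ ≤ C * ‖u‖)
    (p : ℕ → H)
    (hpmonic : ∀ n, p n - P n ∈ Wlt P n)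
    (hportho : ∀ n, ∀ w ∈ Wlt P n, ⟪ p n, w ⟫ = 0)
    (s : ℝ → ℕ → H)
    (hsmonic : ∀ χ : ℝ, 0 < χ → ∀ n, s χ n - P n ∈ Wlt P n)
    (hsortho : ∀ χ : ℝ, 0 < χ → ∀ n, ∀ w ∈ Wlt P n, innerS Δ χ (s χ n) w = 0)
    (n : ℕ) (hn : 2 ≤ n)
    : Tendsto (fun χ : ℝ => χ *
        (innerS Δ χ (G (p n)) (s χ (n - 1)) /
          (‖s χ (n - 1)‖ ^ 2 + χ * ‖Δ (s χ (n - 1))‖ ^ 2)))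
        atTop (nhds (‖p n‖ ^ 2 / ‖p (n - 2)‖ ^ 2)) ∧
      Tendsto (fun χ : ℝ => χ *
        (innerS Δ χ (G (p n)) (s χ n) /
          (‖s χ n‖ ^ 2 + χ * ‖Δ (s χ n)‖ ^ 2)))
        atTop (nhds (⟪ G (p n), G (p (n - 1)) ⟫ / ‖p (n - 1)‖ ^ 2)) := by
  obtain ⟨k, rfl⟩ : ∃ k, n = k + 2 := ⟨n - 2, by omega⟩
  have e1 : k + 2 - 1 = k + 1 := by omega
  have e2 : k + 2 - 2 = k := by omega
  rw [e1, e2]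
  -- basic membership facts
  have hpW : ∀ j, p j ∈ Wlt P (j + 1) := fun j => monic_mem (hpmonic j)
  have hpT : ∀ j, p j ∈ Wtot P := fun j => wlt_le_wtot _ (hpW j)
  have hsW : ∀ χ : ℝ, 0 < χ → ∀ j, s χ j ∈ Wlt P (j + 1) :=
    fun χ hχ j => monic_mem (hsmonic χ hχ j)
  have hGpΔ : ∀ j, Δ (G (p j)) = p j := fun j => hGinv _ (hpT j)
  have hGpmonic : ∀ j, G (p j) - P (j + 1) ∈ Wlt P (j + 1) :=
    fun j => monic_G hP hΔ0 hΔsucc hGmap (hpmonic j) (hGpΔ j)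
  have hp_pos : ∀ j, (0 : ℝ) < ‖p j‖ ^ 2 := by
    intro j
    have hne : p j ≠ 0 := by
      intro h
      have h2 := (Wlt P j).neg_mem (hpmonic j)
      rw [h, zero_sub, neg_neg] at h2
      exact hP.notMem_span_image (by simp) h2
    exact pow_pos (norm_pos_iff.mpr hne) 2
  -- Pythagoras against p j
  have pyth : ∀ j (w : H), w ∈ Wlt P j → ‖p j + w‖ ^ 2 = ‖p j‖ ^ 2 + ‖w‖ ^ 2 := by
    intro j w hw
    rw [norm_add_sq_real, hportho j w hw]; ring
  have hSelf : ∀ (χ : ℝ) (u : H), innerS Δ χ u u = ‖u‖ ^ 2 + χ * ‖Δ u‖ ^ 2 := by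
    intro χ u; rw [innerS, real_inner_self_eq_norm_sq, real_inner_self_eq_norm_sq]
  -- Sobolev minimality
  have hmin : ∀ χ : ℝ, 0 < χ → ∀ (m : ℕ) (v : H), v - P m ∈ Wlt P m →
      ‖s χ m‖ ^ 2 + χ * ‖Δ (s χ m)‖ ^ 2 ≤ ‖v‖ ^ 2 + χ * ‖Δ v‖ ^ 2 := by
    intro χ hχ m v hv
    have hvs : v - s χ m ∈ Wlt P m := by
      have h2 := sub_mem hv (hsmonic χ hχ m)
      rwa [sub_sub_sub_cancel_right] at h2
    have horth := hsortho χ hχ m _ hvs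
    have hv' : v = s χ m + (v - s χ m) := by abel
    have hexp : innerS Δ χ v v = innerS Δ χ (s χ m) (s χ m)
        + 2 * innerS Δ χ (s χ m) (v - s χ m)
        + innerS Δ χ (v - s χ m) (v - s χ m) := by
      conv_lhs => rw [hv']
      simp only [innerS, map_add, real_inner_add_add_self]
      ring
    have hpos : 0 ≤ innerS Δ χ (v - s χ m) (v - s χ m) := by
      rw [hSelf]; positivity
    rw [horth, hSelf, hSelf] at hexp
    linarith
  -- Δ s is monic of one lower degree
  have hΔs_monic : ∀ χ : ℝ, 0 < χ → ∀ j, Δ (s χ (j + 1)) - P j ∈ Wlt P j := by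
    intro χ hχ j
    have h2 : Δ (s χ (j + 1)) - P j = Δ (s χ (j + 1) - P (j + 1)) := by
      rw [map_sub, hΔsucc]
    rw [h2]
    exact delta_map hΔ0 hΔsucc j (hsmonic χ hχ (j + 1))
  -- key bounds
  have key : ∀ (j : ℕ) (χ : ℝ), 0 < χ →
      ‖s χ (j + 1)‖ ^ 2 ≤ ‖G (p j)‖ ^ 2 ∧
      ‖Δ (s χ (j + 1)) - p j‖ ^ 2 ≤ ‖G (p j)‖ ^ 2 / χ ∧
      ‖Δ (s χ (j + 1))‖ ^ 2 = ‖p j‖ ^ 2 + ‖Δ (s χ (j + 1)) - p j‖ ^ 2 := by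
    intro j χ hχ
    have hb := hmin χ hχ (j + 1) (G (p j)) (hGpmonic j)
    rw [hGpΔ j] at hb
    have hd : Δ (s χ (j + 1)) - p j ∈ Wlt P j := by
      have h2 := sub_mem (hΔs_monic χ hχ j) (hpmonic j)
      rwa [sub_sub_sub_cancel_right] at h2
    have hpy : ‖Δ (s χ (j + 1))‖ ^ 2 = ‖p j‖ ^ 2 + ‖Δ (s χ (j + 1)) - p j‖ ^ 2 := by
      have h2 := pyth j _ hd
      rwa [show p j + (Δ (s χ (j + 1)) - p j) = Δ (s χ (j + 1)) by abel] at h2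
    refine ⟨?_, ?_, hpy⟩
    · nlinarith [sq_nonneg ‖Δ (s χ (j + 1)) - p j‖]
    · rw [le_div_iff₀ hχ]
      nlinarith [sq_nonneg ‖s χ (j + 1)‖]
  -- denominator limit
  have hDlim : ∀ j, Tendsto
      (fun χ : ℝ => (‖s χ (j + 1)‖ ^ 2 + χ * ‖Δ (s χ (j + 1))‖ ^ 2) / χ)
      atTop (nhds (‖p j‖ ^ 2)) := by
    intro j
    have hub : Tendsto (fun χ : ℝ => ‖p j‖ ^ 2 + 2 * ‖G (p j)‖ ^ 2 / χ)
        atTop (nhds (‖p j‖ ^ 2)) := by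
      have h0 : Tendsto (fun χ : ℝ => 2 * ‖G (p j)‖ ^ 2 / χ) atTop (nhds 0) :=
        Tendsto.div_atTop tendsto_const_nhds tendsto_id
      simpa using tendsto_const_nhds.add h0
    refine tendsto_of_tendsto_of_tendsto_of_le_of_le' tendsto_const_nhds hub ?_ ?_
    · filter_upwards [eventually_gt_atTop 0] with χ hχ
      obtain ⟨h1, h2, h3⟩ := key j χ hχ
      rw [le_div_iff₀ hχ]
      nlinarith [sq_nonneg ‖s χ (j + 1)‖, sq_nonneg ‖Δ (s χ (j + 1)) - p j‖]
    · filter_upwards [eventually_gt_atTop 0] with χ hχ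
      obtain ⟨h1, h2, h3⟩ := key j χ hχ
      rw [div_le_iff₀ hχ]
      have h4 : χ * ‖Δ (s χ (j + 1)) - p j‖ ^ 2 ≤ ‖G (p j)‖ ^ 2 := by
        rw [le_div_iff₀ hχ] at h2; linarith
      rw [add_mul, div_mul_cancel₀ _ (ne_of_gt hχ)]
      have h5 : χ * ‖Δ (s χ (j + 1))‖ ^ 2
          = χ * ‖p j‖ ^ 2 + χ * ‖Δ (s χ (j + 1)) - p j‖ ^ 2 := by
        rw [h3]; ring
      nlinarith
  have hdiv : ∀ a b χ : ℝ, χ * (a / b) = a / (b / χ) := by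
    intro a b χ
    rw [div_div_eq_mul_div, mul_comm a χ, mul_div_assoc]
  constructor
  · -- case 1
    have hnum1 : ∀ χ : ℝ, 0 < χ →
        innerS Δ χ (G (p (k + 2))) (s χ (k + 1)) = ‖p (k + 2)‖ ^ 2 := by
      intro χ hχ
      have hΔterm : ⟪Δ (G (p (k + 2))), Δ (s χ (k + 1))⟫ = 0 := by
        rw [hGpΔ]
        exact hportho (k + 2) _
          (wlt_mono (by omega) (delta_map hΔ0 hΔsucc (k + 1) (hsW χ hχ (k + 1))))
      have hsym : ⟪G (p (k + 2)), s χ (k + 1)⟫ = ⟪p (k + 2), G (s χ (k + 1))⟫ :=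
        hGsym _ (hpT (k + 2)) _ (wlt_le_wtot _ (hsW χ hχ (k + 1)))
      have hGs : G (s χ (k + 1)) - P (k + 2) ∈ Wlt P (k + 2) :=
        monic_G hP hΔ0 hΔsucc hGmap (hsmonic χ hχ (k + 1))
          (hGinv _ (wlt_le_wtot _ (hsW χ hχ (k + 1))))
      have hip : ⟪p (k + 2), G (s χ (k + 1))⟫ = ‖p (k + 2)‖ ^ 2 := by
        have h1 : G (s χ (k + 1)) - p (k + 2) ∈ Wlt P (k + 2) := by
          have h2 := sub_mem hGs (hpmonic (k + 2))
          rwa [sub_sub_sub_cancel_right] at h2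
        have h3 : ⟪p (k + 2), G (s χ (k + 1))⟫
            = ⟪p (k + 2), p (k + 2)⟫ + ⟪p (k + 2), G (s χ (k + 1)) - p (k + 2)⟫ := by
          rw [← inner_add_right]; congr 1; abel
        rw [h3, hportho (k + 2) _ h1, add_zero, real_inner_self_eq_norm_sq]
      rw [innerS, hΔterm, mul_zero, add_zero, hsym, hip]
    have hTend : Tendsto (fun χ : ℝ => ‖p (k + 2)‖ ^ 2 /
        ((‖s χ (k + 1)‖ ^ 2 + χ * ‖Δ (s χ (k + 1))‖ ^ 2) / χ))
        atTop (nhds (‖p (k + 2)‖ ^ 2 / ‖p k‖ ^ 2)) :=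
      tendsto_const_nhds.div (hDlim k) (ne_of_gt (hp_pos k))
    refine Tendsto.congr' ?_ hTend
    filter_upwards [eventually_gt_atTop 0] with χ hχ
    rw [hnum1 χ hχ, hdiv]
  · -- case 2
    have hnum2 : ∀ χ : ℝ, 0 < χ →
        innerS Δ χ (G (p (k + 2))) (s χ (k + 2)) = ⟪G (p (k + 2)), s χ (k + 2)⟫ := by
      intro χ hχ
      have hΔterm : ⟪Δ (G (p (k + 2))), Δ (s χ (k + 2))⟫ = 0 := by
        rw [hGpΔ]
        exact hportho (k + 2) _ (delta_map hΔ0 hΔsucc (k + 2) (hsW χ hχ (k + 2)))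
      rw [innerS, hΔterm, mul_zero, add_zero]
    have herr : ∀ χ : ℝ, 0 < χ →
        ⟪G (p (k + 2)), s χ (k + 2)⟫ - ⟪G (p (k + 2)), G (p (k + 1))⟫
          = ⟪G (p (k + 2)), G (Δ (s χ (k + 2)) - p (k + 1))⟫ := by
      intro χ hχ
      set e := s χ (k + 2) - G (p (k + 1)) with he
      have heW : e ∈ Wlt P (k + 3) :=
        sub_mem (hsW χ hχ (k + 2)) (monic_mem (hGpmonic (k + 1)))
      have hΔe : Δ e = Δ (s χ (k + 2)) - p (k + 1) := by
        rw [he, map_sub, hGpΔ]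
      have hΔeW : Δ e ∈ Wlt P (k + 2) := delta_map hΔ0 hΔsucc (k + 2) heW
      have hGΔeW : G (Δ e) ∈ Wlt P (k + 3) := hGmap (k + 1) _ hΔeW
      have huW : e - G (Δ e) ∈ Wlt P (k + 3) := sub_mem heW hGΔeW
      have hΔu : Δ (e - G (Δ e)) = 0 := by
        rw [map_sub, hGinv _ (wlt_le_wtot _ hΔeW), sub_self]
      have hu1 : e - G (Δ e) ∈ Wlt P 1 := ker_delta hP hΔ0 hΔsucc (k + 2) _ huW hΔu
      have hGu : G (e - G (Δ e)) ∈ Wlt P 2 := hGmap 0 _ hu1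
      have hzero : ⟪G (p (k + 2)), e - G (Δ e)⟫ = 0 := by
        rw [hGsym _ (hpT (k + 2)) _ (wlt_le_wtot _ hu1)]
        exact hportho (k + 2) _ (wlt_mono (by omega) hGu)
      have h4 : ⟪G (p (k + 2)), e⟫
          = ⟪G (p (k + 2)), G (Δ e)⟫ + ⟪G (p (k + 2)), e - G (Δ e)⟫ := by
        rw [← inner_add_right]; congr 1; abel
      rw [← inner_sub_right, ← he, h4, hzero, add_zero, hΔe]
    have hNlim : Tendsto (fun χ : ℝ => ⟪G (p (k + 2)), s χ (k + 2)⟫)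
        atTop (nhds ⟪G (p (k + 2)), G (p (k + 1))⟫) := by
      have hz : Tendsto (fun χ : ℝ =>
          ⟪G (p (k + 2)), s χ (k + 2)⟫ - ⟪G (p (k + 2)), G (p (k + 1))⟫)
          atTop (nhds 0) := by
        have hg : Tendsto (fun χ : ℝ =>
            ‖G (p (k + 2))‖ * (C * Real.sqrt (‖G (p (k + 1))‖ ^ 2 / χ)))
            atTop (nhds 0) := by
          have h0 : Tendsto (fun χ : ℝ => ‖G (p (k + 1))‖ ^ 2 / χ) atTop (nhds 0) :=
            Tendsto.div_atTop tendsto_const_nhds tendsto_id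
          have h1 := h0.sqrt
          rw [Real.sqrt_zero] at h1
          have h2 := (tendsto_const_nhds (x := C) (f := atTop)).mul h1
          rw [mul_zero] at h2
          have h3 := (tendsto_const_nhds (x := ‖G (p (k + 2))‖) (f := atTop)).mul h2
          rwa [mul_zero] at h3
        refine squeeze_zero_norm' ?_ hg
        filter_upwards [eventually_gt_atTop 0] with χ hχ
        rw [herr χ hχ]
        set d := Δ (s χ (k + 2)) - p (k + 1) with hdd
        have hdW : d ∈ Wlt P (k + 2) := by
          rw [hdd]
          exact sub_mem (delta_map hΔ0 hΔsucc (k + 2) (hsW χ hχ (k + 2))) (hpW (k + 1))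
        have hd2 : ‖d‖ ^ 2 ≤ ‖G (p (k + 1))‖ ^ 2 / χ := (key (k + 1) χ hχ).2.1
        have hd : ‖d‖ ≤ Real.sqrt (‖G (p (k + 1))‖ ^ 2 / χ) := by
          have h5 := Real.sqrt_le_sqrt hd2
          rwa [Real.sqrt_sq (norm_nonneg _)] at h5
        calc ‖⟪G (p (k + 2)), G d⟫‖ ≤ ‖G (p (k + 2))‖ * ‖G d‖ := by
              rw [Real.norm_eq_abs]; exact abs_real_inner_le_norm _ _
          _ ≤ ‖G (p (k + 2))‖ * (C * ‖d‖) := by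
              exact mul_le_mul_of_nonneg_left
                (hGbound d (wlt_le_wtot _ hdW)) (norm_nonneg _)
          _ ≤ ‖G (p (k + 2))‖ * (C * Real.sqrt (‖G (p (k + 1))‖ ^ 2 / χ)) := by
              have := mul_le_mul_of_nonneg_left hd (le_of_lt hC)
              exact mul_le_mul_of_nonneg_left this (norm_nonneg _)
      have h6 := hz.add (tendsto_const_nhds (x := ⟪G (p (k + 2)), G (p (k + 1))⟫)
          (f := atTop))
      rw [zero_add] at h6
      refine h6.congr ?_
      intro χ; abel
    have hTend : Tendsto (fun χ : ℝ => ⟪G (p (k + 2)), s χ (k + 2)⟫ /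
        ((‖s χ (k + 2)‖ ^ 2 + χ * ‖Δ (s χ (k + 2))‖ ^ 2) / χ))
        atTop (nhds (⟪G (p (k + 2)), G (p (k + 1))⟫ / ‖p (k + 1)‖ ^ 2)) :=
      hNlim.div (hDlim (k + 1)) (ne_of_gt (hp_pos (k + 1)))
    refine Tendsto.congr' ?_ hTend
    filter_upwards [eventually_gt_atTop 0] with χ hχ
    rw [hnum2 χ hχ, hdiv]
end

section
/- Fix n ≥ 1 and regard s_n = s_n(χ) as a function of the parameter χ > 0. Then lim_{χ→∞} ‖Δs_n(χ) − p_{n−1}‖₂ = 0. -/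
open Filter RealInnerProductSpace

variable {H : Type*} [NormedAddCommGroup H] [InnerProductSpace ℝ H]

lemma Wlt_mono (P : ℕ → H) {a b : ℕ} (h : a ≤ b) : Wlt P a ≤ Wlt P b :=
  Submodule.span_mono (Set.image_mono (fun _ hx => lt_of_lt_of_le hx h))

lemma Wlt_le_Wtot (P : ℕ → H) (n : ℕ) : Wlt P n ≤ Wtot P :=
  Submodule.span_mono (Set.image_subset_range _ _)

lemma delta_maps (P : ℕ → H) (Δ : H →ₗ[ℝ] H)
    (hΔ0 : Δ (P 0) = 0) (hΔsucc : ∀ n, Δ (P (n + 1)) = P n)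
    (n : ℕ) : ∀ u ∈ Wlt P (n + 1), Δ u ∈ Wlt P n := by
  intro u hu
  induction hu using Submodule.span_induction with
  | mem x hx =>
    obtain ⟨k, hk, rfl⟩ := hx
    cases k with
    | zero => rw [hΔ0]; exact (Wlt P n).zero_mem
    | succ j =>
      rw [hΔsucc]
      exact Submodule.subset_span ⟨j, Nat.lt_of_succ_lt_succ hk, rfl⟩
  | zero => rw [map_zero]; exact (Wlt P n).zero_mem
  | add x y hx hy ihx ihy => rw [map_add]; exact (Wlt P n).add_mem ihx ihy
  | smul a x hx ihx => rw [map_smul]; exact (Wlt P n).smul_mem a ihx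

/-- For fixed `n ≥ 1`, `lim_{χ→∞} ‖Δs_n(χ) − p_{n−1}‖₂ = 0`. -/
theorem statement14
    (P : ℕ → H) (hP : LinearIndependent ℝ P)
    (Δ G : H →ₗ[ℝ] H)
    (hΔ0 : Δ (P 0) = 0) (hΔsucc : ∀ n, Δ (P (n + 1)) = P n)
    (hGsym : ∀ u ∈ Wtot P, ∀ v ∈ Wtot P, ⟪ G u, v ⟫ = ⟪ u, G v ⟫)
    (hGinv : ∀ u ∈ Wtot P, Δ (G u) = u)
    (hGmap : ∀ n, ∀ u ∈ Wlt P (n + 1), G u ∈ Wlt P (n + 2))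
    (C : ℝ) (hC : 0 < C)
    (hGbound : ∀ u ∈ Wtot P, ‖G u‖ ≤ C * ‖u‖)
    (p : ℕ → H)
    (hpmonic : ∀ n, p n - P n ∈ Wlt P n)
    (hportho : ∀ n, ∀ w ∈ Wlt P n, ⟪ p n, w ⟫ = 0)
    (s : ℝ → ℕ → H)
    (hsmonic : ∀ χ : ℝ, 0 < χ → ∀ n, s χ n - P n ∈ Wlt P n)
    (hsortho : ∀ χ : ℝ, 0 < χ → ∀ n, ∀ w ∈ Wlt P n, innerS Δ χ (s χ n) w = 0)
    (n : ℕ) (hn : 1 ≤ n)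
    : Tendsto (fun χ : ℝ => ‖Δ (s χ n) - p (n - 1)‖) atTop (nhds 0) := by
  obtain ⟨m, rfl⟩ : ∃ m, n = m + 1 := ⟨n - 1, (Nat.succ_pred_eq_of_pos hn).symm⟩
  simp only [Nat.add_sub_cancel]
  set A : ℝ := ‖P (m + 1)‖ ^ 2 with hA
  set B : ℝ := ‖Δ (P (m + 1))‖ ^ 2 with hB
  have hA0 : 0 ≤ A := sq_nonneg _
  have hB0 : 0 ≤ B := sq_nonneg _
  -- the key bound
  have key : ∀ χ : ℝ, 0 < χ →
      ‖Δ (s χ (m + 1)) - p m‖ ≤ C * Real.sqrt (A + χ * B) / χ := by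
    intro χ hχ
    set sn := s χ (m + 1) with hsn
    set q := Δ sn - p m with hq
    -- q ∈ Wlt P m
    have hqmem : q ∈ Wlt P m := by
      have h1 : sn - P (m + 1) ∈ Wlt P (m + 1) := hsmonic χ hχ (m + 1)
      have h2 : Δ (sn - P (m + 1)) ∈ Wlt P m :=
        delta_maps P Δ hΔ0 hΔsucc m _ h1
      have h3 : Δ sn - P m ∈ Wlt P m := by
        have := hΔsucc m
        rw [map_sub, this] at h2
        exact h2
      have h4 : p m - P m ∈ Wlt P m := hpmonic m
      have := (Wlt P m).sub_mem h3 h4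
      simpa [hq, sub_sub_sub_cancel_right] using this
    have hqtot : q ∈ Wtot P := Wlt_le_Wtot P m hqmem
    -- ⟪Δ sn, q⟫ = ‖q‖²
    have hinner : ⟪Δ sn, q⟫ = ‖q‖ ^ 2 := by
      have h0 : ⟪p m, q⟫ = 0 := hportho m q hqmem
      have : ⟪Δ sn, q⟫ = ⟪q, q⟫ + ⟪p m, q⟫ := by
        rw [← inner_add_left]
        congr 1
        rw [hq]; abel
      rw [this, h0, real_inner_self_eq_norm_sq]
      ring
    -- G q ∈ Wlt P (m+1)
    have hGq : G q ∈ Wlt P (m + 1) := by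
      cases m with
      | zero =>
        have : q = 0 := by
          have : q ∈ Submodule.span ℝ (P '' Set.Iio 0) := hqmem
          simpa [Set.Iio, Submodule.span_empty] using this
        rw [this, map_zero]
        exact (Wlt P 1).zero_mem
      | succ k => exact hGmap k q hqmem
    -- Sobolev orthogonality: χ ‖q‖² = -⟪sn, G q⟫
    have hortho := hsortho χ hχ (m + 1) (G q) hGq
    rw [innerS, hGinv q hqtot, hinner] at hortho
    -- χ ‖q‖² ≤ C ‖sn‖ ‖q‖
    have hbound1 : χ * ‖q‖ ^ 2 ≤ C * ‖sn‖ * ‖q‖ := by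
      have h1 : |⟪sn, G q⟫| ≤ ‖sn‖ * ‖G q‖ := abs_real_inner_le_norm _ _
      have h2 : ‖G q‖ ≤ C * ‖q‖ := hGbound q hqtot
      have h3 : χ * ‖q‖ ^ 2 = -⟪sn, G q⟫ := by linarith
      calc χ * ‖q‖ ^ 2 = -⟪sn, G q⟫ := h3
        _ ≤ |⟪sn, G q⟫| := neg_le_abs _
        _ ≤ ‖sn‖ * ‖G q‖ := h1
        _ ≤ ‖sn‖ * (C * ‖q‖) := by
            exact mul_le_mul_of_nonneg_left h2 (norm_nonneg _)
        _ = C * ‖sn‖ * ‖q‖ := by ring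
    -- minimality: ‖sn‖² ≤ A + χ B
    have hsnbound : ‖sn‖ ^ 2 ≤ A + χ * B := by
      set d := P (m + 1) - sn with hd
      have hdmem : d ∈ Wlt P (m + 1) := by
        have := (Wlt P (m + 1)).neg_mem (hsmonic χ hχ (m + 1))
        simpa [hd, neg_sub] using this
      have hds := hsortho χ hχ (m + 1) d hdmem
      rw [innerS] at hds
      have hexp : A + χ * B = ⟪sn, sn⟫ + 2 * ⟪sn, d⟫ + ⟪d, d⟫ +
          χ * (⟪Δ sn, Δ sn⟫ + 2 * ⟪Δ sn, Δ d⟫ + ⟪Δ d, Δ d⟫) := by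
        have hPd : P (m + 1) = sn + d := by rw [hd]; abel
        rw [hA, hB, hPd, ← real_inner_self_eq_norm_sq, ← real_inner_self_eq_norm_sq,
          map_add, real_inner_add_add_self, real_inner_add_add_self]
      rw [hexp]
      have h5 : (0:ℝ) ≤ ⟪d, d⟫ := real_inner_self_nonneg
      have h6 : (0:ℝ) ≤ ⟪Δ d, Δ d⟫ := real_inner_self_nonneg
      have h8 : (0:ℝ) ≤ ⟪Δ sn, Δ sn⟫ := real_inner_self_nonneg
      have h7 : ⟪sn, sn⟫ = ‖sn‖ ^ 2 := real_inner_self_eq_norm_sq sn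
      nlinarith [mul_nonneg hχ.le h6, mul_nonneg hχ.le h8, hds]
    have hsnle : ‖sn‖ ≤ Real.sqrt (A + χ * B) := by
      have := Real.sqrt_le_sqrt hsnbound
      rwa [Real.sqrt_sq (norm_nonneg sn)] at this
    -- conclude
    rcases eq_or_lt_of_le (norm_nonneg q) with h0 | h0
    · rw [← h0]
      positivity
    · have h8 : χ * ‖q‖ ≤ C * ‖sn‖ := by
        have := hbound1
        nlinarith
      have h9 : C * ‖sn‖ ≤ C * Real.sqrt (A + χ * B) :=
        mul_le_mul_of_nonneg_left hsnle hC.le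
      rw [div_eq_inv_mul, ← mul_le_mul_iff_right₀ hχ]
      calc χ * ‖q‖ ≤ C * ‖sn‖ := h8
        _ ≤ C * Real.sqrt (A + χ * B) := h9
        _ = χ * (χ⁻¹ * (C * Real.sqrt (A + χ * B))) := by
            field_simp
  -- the majorant tends to 0
  have hmaj : Tendsto (fun χ : ℝ => C * Real.sqrt (A + χ * B) / χ) atTop (nhds 0) := by
    have h1 : Tendsto (fun χ : ℝ => A / χ ^ 2 + B / χ) atTop (nhds 0) := by
      have hA' : Tendsto (fun χ : ℝ => A / χ ^ 2) atTop (nhds 0) :=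
        Tendsto.div_atTop tendsto_const_nhds (tendsto_pow_atTop two_ne_zero)
      have hB' : Tendsto (fun χ : ℝ => B / χ) atTop (nhds 0) :=
        Tendsto.div_atTop tendsto_const_nhds tendsto_id
      simpa using hA'.add hB'
    have h2 : Tendsto (fun χ : ℝ => C * Real.sqrt (A / χ ^ 2 + B / χ)) atTop (nhds 0) := by
      have := h1.sqrt
      rw [Real.sqrt_zero] at this
      simpa using this.const_mul C
    refine h2.congr' ?_
    filter_upwards [eventually_gt_atTop (0:ℝ)] with χ hχ
    have hnum : (0:ℝ) ≤ A + χ * B := by positivity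
    have : A / χ ^ 2 + B / χ = (A + χ * B) / χ ^ 2 := by
      field_simp
    rw [this, Real.sqrt_div hnum, Real.sqrt_sq hχ.le]
    field_simp
  -- squeeze
  refine squeeze_zero' ?_ ?_ hmaj
  · filter_upwards with χ using norm_nonneg _
  · filter_upwards [eventually_gt_atTop (0:ℝ)] with χ hχ using key χ hχ
end

section
/- For all integers m, n ≥ 1 with |n − m| ≥ 3 one has ⟨f_n, f_m⟩_S = 0. -/
open Filter RealInnerProductSpace

variable {H : Type*} [NormedAddCommGroup H] [InnerProductSpace ℝ H]

lemma P_mem_Wlt (P : ℕ → H) {k n : ℕ} (h : k < n) : P k ∈ Wlt P n :=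
  Submodule.subset_span ⟨k, h, rfl⟩

lemma p_mem_Wlt (P : ℕ → H) (p : ℕ → H) (hpmonic : ∀ n, p n - P n ∈ Wlt P n)
    (n : ℕ) : p n ∈ Wlt P (n + 1) := by
  have h1 : p n - P n ∈ Wlt P (n + 1) := Wlt_mono P (Nat.le_succ n) (hpmonic n)
  have h2 : P n ∈ Wlt P (n + 1) := P_mem_Wlt P (Nat.lt_succ_self n)
  have := (Wlt P (n + 1)).add_mem h1 h2
  simpa using this

/-- For `m, n ≥ 1` with `|n − m| ≥ 3`: `⟨f_n, f_m⟩_S = 0` (where `f_n = Gp_{n−1}`). -/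
theorem statement15
    (P : ℕ → H) (hP : LinearIndependent ℝ P)
    (Δ G : H →ₗ[ℝ] H)
    (hΔ0 : Δ (P 0) = 0) (hΔsucc : ∀ n, Δ (P (n + 1)) = P n)
    (hGsym : ∀ u ∈ Wtot P, ∀ v ∈ Wtot P, ⟪ G u, v ⟫ = ⟪ u, G v ⟫)
    (hGinv : ∀ u ∈ Wtot P, Δ (G u) = u)
    (hGmap : ∀ n, ∀ u ∈ Wlt P (n + 1), G u ∈ Wlt P (n + 2))
    (χ : ℝ) (hχ : 0 < χ)
    (p : ℕ → H)
    (hpmonic : ∀ n, p n - P n ∈ Wlt P n)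
    (hportho : ∀ n, ∀ w ∈ Wlt P n, ⟪ p n, w ⟫ = 0)
    : ∀ m n : ℕ, 1 ≤ m → 1 ≤ n → (m + 3 ≤ n ∨ n + 3 ≤ m) →
      innerS Δ χ (G (p (n - 1))) (G (p (m - 1))) = 0 := by
  have hpW : ∀ a : ℕ, p a ∈ Wtot P := fun a =>
    Wlt_le_Wtot P (a + 1) (p_mem_Wlt P p hpmonic a)
  have hGpW : ∀ a : ℕ, G (p a) ∈ Wlt P (a + 2) := fun a =>
    hGmap a _ (p_mem_Wlt P p hpmonic a)
  have hGGpW : ∀ a : ℕ, G (G (p a)) ∈ Wlt P (a + 3) := fun a =>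
    hGmap (a + 1) _ (hGpW a)
  -- key: for a + 3 ≤ b, ⟪G (p a), G (p b)⟫ = 0 and ⟪p a, p b⟫ = 0
  have key : ∀ a b : ℕ, a + 3 ≤ b →
      ⟪ G (p a), G (p b) ⟫ = 0 ∧ ⟪ p a, p b ⟫ = 0 := by
    intro a b hab
    constructor
    · have h1 : ⟪ G (G (p a)), p b ⟫ = ⟪ G (p a), G (p b) ⟫ :=
        hGsym (G (p a)) (Wlt_le_Wtot P (a + 2) (hGpW a)) (p b) (hpW b)
      rw [← h1, real_inner_comm]
      exact hportho b _ (Wlt_mono P hab (hGGpW a))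
    · rw [real_inner_comm]
      exact hportho b _ (Wlt_mono P (by omega) (p_mem_Wlt P p hpmonic a))
  intro m n hm hn hmn
  have hΔa : ∀ a : ℕ, Δ (G (p a)) = p a := fun a => hGinv (p a) (hpW a)
  unfold innerS
  rw [hΔa, hΔa]
  rcases hmn with h | h
  · have hk := key (m - 1) (n - 1) (by omega)
    rw [real_inner_comm (G (p (m-1))) (G (p (n-1))), real_inner_comm (p (m-1)) (p (n-1)), hk.1, hk.2]
    ring
  · have hk := key (n - 1) (m - 1) (by omega)
    rw [hk.1, hk.2]
    ring
end

section
/- There exist real sequences (t_n)_{n≥2} and (u_n)_{n≥3} such that the sequence defined by f̃₁ = f₁, f̃₂ = f₂ + t₂·f̃₁, and f̃_n = f_n + t_n·f̃_{n−1} + u_n·f̃_{n−2} for n ≥ 3 satisfies ⟨f̃_n, f̃_m⟩_S = 0 for all m, n ≥ 1 with m ≠ n. -/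
open Filter RealInnerProductSpace

variable {H : Type*} [NormedAddCommGroup H] [InnerProductSpace ℝ H]

/-- Gram–Schmidt orthogonalization of `f_{n} = G p_{n-1}` with respect to `innerS`. -/
noncomputable def ftdef (G Δ : H →ₗ[ℝ] H) (χ : ℝ) (p : ℕ → H) : ℕ → H
  | 0 => 0
  | 1 => G (p 0)
  | n+2 => G (p (n+1))
      - (innerS Δ χ (G (p (n+1))) (ftdef G Δ χ p (n+1)) /
          innerS Δ χ (ftdef G Δ χ p (n+1)) (ftdef G Δ χ p (n+1))) • ftdef G Δ χ p (n+1)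
      - (innerS Δ χ (G (p (n+1))) (ftdef G Δ χ p n) /
          innerS Δ χ (ftdef G Δ χ p n) (ftdef G Δ χ p n)) • ftdef G Δ χ p n

/-- There exist sequences `(t_n)`, `(u_n)` such that `f̃₁ = f₁`, `f̃₂ = f₂ + t₂f̃₁`, `f̃_n = f_n + t_nf̃_{n−1} + u_nf̃_{n−2}` for `n ≥ 3`, and `⟨f̃_n, f̃_m⟩_S = 0` for `m ≠ n`, `m, n ≥ 1`. -/
theorem statement16
    (P : ℕ → H) (hP : LinearIndependent ℝ P)
    (Δ G : H →ₗ[ℝ] H)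
    (hΔ0 : Δ (P 0) = 0) (hΔsucc : ∀ n, Δ (P (n + 1)) = P n)
    (hGsym : ∀ u ∈ Wtot P, ∀ v ∈ Wtot P, ⟪ G u, v ⟫ = ⟪ u, G v ⟫)
    (hGinv : ∀ u ∈ Wtot P, Δ (G u) = u)
    (hGmap : ∀ n, ∀ u ∈ Wlt P (n + 1), G u ∈ Wlt P (n + 2))
    (χ : ℝ) (hχ : 0 < χ)
    (p : ℕ → H)
    (hpmonic : ∀ n, p n - P n ∈ Wlt P n)
    (hportho : ∀ n, ∀ w ∈ Wlt P n, ⟪ p n, w ⟫ = 0)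
    : ∃ (t u : ℕ → ℝ) (ft : ℕ → H),
      ft 1 = G (p 0) ∧
      ft 2 = G (p 1) + t 2 • ft 1 ∧
      (∀ n, 3 ≤ n → ft n = G (p (n - 1)) + t n • ft (n - 1) + u n • ft (n - 2)) ∧
      (∀ m n, 1 ≤ m → 1 ≤ n → m ≠ n → innerS Δ χ (ft n) (ft m) = 0) := by
  -- basic span facts
  have hWmono : ∀ {a b : ℕ}, a ≤ b → Wlt P a ≤ Wlt P b := fun h =>
    Submodule.span_mono (Set.image_mono (Set.Iio_subset_Iio h))
  have hWtot : ∀ n, Wlt P n ≤ Wtot P := fun n =>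
    Submodule.span_mono (Set.image_subset_range _ _)
  have hPmem : ∀ n, P n ∈ Wlt P (n+1) := fun n =>
    Submodule.subset_span ⟨n, Nat.lt_succ_self n, rfl⟩
  have hpW : ∀ n, p n ∈ Wlt P (n+1) := by
    intro n
    have h1 : p n - P n ∈ Wlt P (n+1) := hWmono (Nat.le_succ n) (hpmonic n)
    have h2 := Submodule.add_mem _ h1 (hPmem n)
    simpa using h2
  have hpT : ∀ n, p n ∈ Wtot P := fun n => hWtot _ (hpW n)
  have h0 : ftdef G Δ χ p 0 = 0 := by rw [ftdef]
  -- innerS algebra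
  have hS0r : ∀ f : H, innerS Δ χ f 0 = 0 := by intro f; simp [innerS]
  have hScomm : ∀ f g : H, innerS Δ χ f g = innerS Δ χ g f := by
    intro f g; simp [innerS, real_inner_comm]
  have hSsub : ∀ a b c : H, innerS Δ χ (a - b) c = innerS Δ χ a c - innerS Δ χ b c := by
    intro a b c; simp only [innerS, map_sub, inner_sub_left]; ring
  have hSsmul : ∀ (r : ℝ) (a c : H), innerS Δ χ (r • a) c = r * innerS Δ χ a c := by
    intro r a c; simp only [innerS, map_smul, real_inner_smul_left]; ring
  have hSpos : ∀ f : H, f ≠ 0 → 0 < innerS Δ χ f f := by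
    intro f hf
    have h1 : (0:ℝ) < ⟪f, f⟫ :=
      lt_of_not_ge (fun h => hf (real_inner_self_nonpos.mp h))
    have h2 : (0:ℝ) ≤ χ * ⟪Δ f, Δ f⟫ := mul_nonneg hχ.le real_inner_self_nonneg
    exact add_pos_of_pos_of_nonneg h1 h2
  -- membership of the ft's
  have hftW : ∀ n, ftdef G Δ χ p n ∈ Wlt P (n+1) := by
    intro n
    induction n using Nat.strong_induction_on with
    | _ n ih =>
      obtain _ | _ | k := n
      · rw [h0]; exact Submodule.zero_mem _
      · rw [ftdef]; exact hGmap 0 _ (hpW 0)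
      · rw [show k+1+1 = k+2 from rfl, ftdef]
        refine Submodule.sub_mem _ (Submodule.sub_mem _ ?_ ?_) ?_
        · exact hGmap (k+1) _ (hpW (k+1))
        · exact Submodule.smul_mem _ _ (hWmono (by omega) (ih (k+1) (by omega)))
        · exact Submodule.smul_mem _ _ (hWmono (by omega) (ih k (by omega)))
  have hΔmem : ∀ n, Δ (ftdef G Δ χ p n) ∈ Wlt P n := by
    intro n
    induction n using Nat.strong_induction_on with
    | _ n ih =>
      obtain _ | _ | k := n
      · rw [h0, map_zero]; exact Submodule.zero_mem _
      · rw [ftdef, hGinv _ (hpT 0)]; exact hpW 0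
      · rw [show k+1+1 = k+2 from rfl, ftdef]
        simp only [map_sub, map_smul, hGinv _ (hpT (k+1))]
        refine Submodule.sub_mem _ (Submodule.sub_mem _ ?_ ?_) ?_
        · exact hpW (k+1)
        · exact Submodule.smul_mem _ _ (hWmono (by omega) (ih (k+1) (by omega)))
        · exact Submodule.smul_mem _ _ (hWmono (by omega) (ih k (by omega)))
  have key2 : ∀ (a x y : H) (S : Submodule ℝ H), x ∈ S → y ∈ S → a - x - y - a ∈ S := by
    intro a x y S hx hy
    have h : a - x - y - a = -x - y := by abel
    rw [h]; exact Submodule.sub_mem _ (Submodule.neg_mem _ hx) hy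
  have hΔft : ∀ n, Δ (ftdef G Δ χ p (n+1)) - p n ∈ Wlt P n := by
    intro n
    obtain _ | k := n
    · rw [ftdef, hGinv _ (hpT 0), sub_self]; exact Submodule.zero_mem _
    · rw [show k+1+1 = k+2 from rfl, ftdef]
      simp only [map_sub, map_smul, hGinv _ (hpT (k+1))]
      exact key2 _ _ _ _ (Submodule.smul_mem _ _ (hΔmem (k+1)))
        (Submodule.smul_mem _ _ (hWmono (Nat.le_succ k) (hΔmem k)))
  have hftne : ∀ n, ftdef G Δ χ p (n+1) ≠ 0 := by
    intro n h
    have h1 : Δ (ftdef G Δ χ p (n+1)) - p n ∈ Wlt P n := hΔft n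
    rw [h, map_zero, zero_sub] at h1
    have h2 : p n ∈ Wlt P n := by simpa using Submodule.neg_mem _ h1
    have h3 : P n ∈ Wlt P n := by
      have := Submodule.sub_mem _ h2 (hpmonic n)
      simpa using this
    exact hP.notMem_span_image (by simp) h3
  -- key Gram–Schmidt vanishing
  have hKey : ∀ k m, m + 1 ≤ k → innerS Δ χ (G (p (k+1))) (ftdef G Δ χ p m) = 0 := by
    intro k m hm
    obtain _ | m := m
    · rw [h0]; exact hS0r _
    · have hGf : G (ftdef G Δ χ p (m+1)) ∈ Wlt P (k+1) :=
        hWmono (by omega) (hGmap (m+1) _ (hftW (m+1)))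
      have hΔf : Δ (ftdef G Δ χ p (m+1)) ∈ Wlt P (k+1) := hWmono (by omega) (hΔmem (m+1))
      have e1 : ⟪G (p (k+1)), ftdef G Δ χ p (m+1)⟫ = 0 := by
        rw [hGsym _ (hpT (k+1)) _ (hWtot _ (hftW (m+1)))]
        exact hportho (k+1) _ hGf
      have e2 : ⟪Δ (G (p (k+1))), Δ (ftdef G Δ χ p (m+1))⟫ = 0 := by
        rw [hGinv _ (hpT (k+1))]
        exact hportho (k+1) _ hΔf
      simp [innerS, e1, e2]
  -- main orthogonality
  have hmain : ∀ n m, m < n → innerS Δ χ (ftdef G Δ χ p n) (ftdef G Δ χ p m) = 0 := by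
    intro n
    induction n using Nat.strong_induction_on with
    | _ n ih =>
      intro m hmn
      obtain _ | _ | k := n
      · omega
      · have hm0 : m = 0 := by omega
        subst hm0; rw [h0]; exact hS0r _
      · obtain _ | m := m
        · rw [h0]; exact hS0r _
        · rw [show k+1+1 = k+2 from rfl, ftdef]
          simp only [hSsub, hSsmul]
          rcases (by omega : m = k ∨ m + 1 = k ∨ m + 2 ≤ k) with rfl | rfl | hk
          · have h3 : innerS Δ χ (ftdef G Δ χ p m) (ftdef G Δ χ p (m+1)) = 0 := by
              rw [hScomm]; exact ih (m+1) (by omega) m (by omega)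
            rw [h3, mul_zero, sub_zero,
              div_mul_cancel₀ _ (ne_of_gt (hSpos _ (hftne m))), sub_self]
          · have h2 : innerS Δ χ (ftdef G Δ χ p (m+1+1)) (ftdef G Δ χ p (m+1)) = 0 :=
              ih (m+1+1) (by omega) (m+1) (by omega)
            rw [h2, mul_zero, sub_zero,
              div_mul_cancel₀ _ (ne_of_gt (hSpos _ (hftne m))), sub_self]
          · rw [hKey k (m+1) (by omega), ih (k+1) (by omega) (m+1) (by omega),
              ih k (by omega) (m+1) (by omega)]
            ring
  -- the explicit first/second step identities
  have e : ∀ n, ftdef G Δ χ p (n+2) = G (p (n+1))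
      - (innerS Δ χ (G (p (n+1))) (ftdef G Δ χ p (n+1)) /
          innerS Δ χ (ftdef G Δ χ p (n+1)) (ftdef G Δ χ p (n+1))) • ftdef G Δ χ p (n+1)
      - (innerS Δ χ (G (p (n+1))) (ftdef G Δ χ p n) /
          innerS Δ χ (ftdef G Δ χ p n) (ftdef G Δ χ p n)) • ftdef G Δ χ p n := by
    intro n; rw [ftdef]
  have Hb : ftdef G Δ χ p 2 = G (p 1) +
      (-(innerS Δ χ (G (p 1)) (ftdef G Δ χ p 1) /
          innerS Δ χ (ftdef G Δ χ p 1) (ftdef G Δ χ p 1))) • ftdef G Δ χ p 1 := by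
    have e0 := e 0
    rw [h0, smul_zero, sub_zero] at e0
    simp only [Nat.zero_add] at e0
    rw [e0, neg_smul, sub_eq_add_neg]
  have Hc : ∀ k, ftdef G Δ χ p (k+1+2) = G (p (k+1+1)) +
      (-(innerS Δ χ (G (p (k+1+1))) (ftdef G Δ χ p (k+1+1)) /
          innerS Δ χ (ftdef G Δ χ p (k+1+1)) (ftdef G Δ χ p (k+1+1)))) • ftdef G Δ χ p (k+1+1) +
      (-(innerS Δ χ (G (p (k+1+1))) (ftdef G Δ χ p (k+1)) /
          innerS Δ χ (ftdef G Δ χ p (k+1)) (ftdef G Δ χ p (k+1)))) • ftdef G Δ χ p (k+1) := by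
    intro k
    rw [e (k+1), neg_smul, neg_smul, sub_eq_add_neg, sub_eq_add_neg]
  refine ⟨fun n => -(innerS Δ χ (G (p (n-1))) (ftdef G Δ χ p (n-1)) /
      innerS Δ χ (ftdef G Δ χ p (n-1)) (ftdef G Δ χ p (n-1))),
    fun n => -(innerS Δ χ (G (p (n-1))) (ftdef G Δ χ p (n-2)) /
      innerS Δ χ (ftdef G Δ χ p (n-2)) (ftdef G Δ χ p (n-2))),
    ftdef G Δ χ p, by rw [ftdef], ?_, ?_, ?_⟩
  · exact Hb
  · intro n hn
    obtain ⟨k, rfl⟩ : ∃ k, n = k + 3 := ⟨n - 3, by omega⟩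
    exact Hc k
  · intro m n hm hn hne
    rcases lt_or_gt_of_ne hne with h | h
    · exact hmain n m h
    · rw [hScomm]; exact hmain m n h
end

section
/- (Generalized recurrence for higher-order Sobolev orthogonal polynomials.) For every n ≥ 0 one has 𝒢^m p_{n+1} = s̃_{n+m+1} + Σ_{ℓ=0}^{2m−1} a_{n,ℓ}·s̃_{n+m−ℓ}, where a_{n,ℓ} = ⟨𝒢^m p_{n+1}, s̃_{n+m−ℓ}⟩_{S^m}/‖s̃_{n+m−ℓ}‖_{S^m}² whenever n+m−ℓ ≥ 0, and the term with index n+m−ℓ < 0 is interpreted as 0 (since s̃_j = 0 for j < 0). -/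
open Filter RealInnerProductSpace

variable {H : Type*} [NormedAddCommGroup H] [InnerProductSpace ℝ H]

/-- The order-`m` Sobolev inner product `⟨f, g⟩_{Sᵐ} = Σ_{ℓ=0}^m χ_ℓ ⟨Δ^ℓ f, Δ^ℓ g⟩₂`. -/
noncomputable def innerSm (Δ : H →ₗ[ℝ] H) (χ : ℕ → ℝ) (m : ℕ) (f g : H) : ℝ :=
  ∑ ℓ ∈ Finset.range (m + 1), χ ℓ * ⟪ (Δ ^ ℓ) f, (Δ ^ ℓ) g ⟫

namespace St17

lemma Wlt_mono (P : ℕ → H) : Monotone (Wlt P) := fun a b h =>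
  Submodule.span_mono (Set.image_mono (fun x hx => lt_of_lt_of_le hx h))

lemma mem_Wlt (P : ℕ → H) {j n : ℕ} (h : j < n) : P j ∈ Wlt P n :=
  Submodule.subset_span ⟨j, h, rfl⟩

lemma Wlt_le_Wtot (P : ℕ → H) (n : ℕ) : Wlt P n ≤ Wtot P :=
  Submodule.span_mono (by rintro x ⟨j, _, rfl⟩; exact ⟨j, rfl⟩)

lemma notMem_Wlt {P : ℕ → H} (hP : LinearIndependent ℝ P) (n : ℕ) :
    P n ∉ Wlt P n := hP.notMem_span_image (by simp)

lemma Wlt_zero (P : ℕ → H) : Wlt P 0 = ⊥ := by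
  have : P '' Set.Iio 0 = (∅ : Set H) := by ext x; simp
  simp [Wlt, this]

lemma exists_Wlt {P : ℕ → H} {u : H} (hu : u ∈ Wtot P) : ∃ n, u ∈ Wlt P n := by
  have hdir : Directed (· ≤ ·) (Wlt P) := (Wlt_mono P).directed_le
  have : u ∈ ⨆ n, Wlt P n := by
    refine Submodule.span_le.2 ?_ hu
    rintro x ⟨j, rfl⟩
    exact Submodule.mem_iSup_of_mem (j+1) (mem_Wlt P (Nat.lt_succ_self j))
  exact (Submodule.mem_iSup_of_directed _ hdir).1 this

section maps
variable {P : ℕ → H} {Δ G : H →ₗ[ℝ] H}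

lemma delta_maps (hΔ0 : Δ (P 0) = 0) (hΔsucc : ∀ n, Δ (P (n + 1)) = P n)
    {n : ℕ} {u : H} (hu : u ∈ Wlt P n) : Δ u ∈ Wlt P (n - 1) := by
  induction hu using Submodule.span_induction with
  | mem x hx =>
    obtain ⟨j, hj, rfl⟩ := hx
    cases j with
    | zero => simp [hΔ0]
    | succ k =>
      rw [hΔsucc]
      have hj' : k + 1 < n := hj
      exact mem_Wlt P (by omega)
  | zero => simp
  | add x y _ _ hx hy => rw [map_add]; exact add_mem hx hy
  | smul c x _ hx => rw [map_smul]; exact Submodule.smul_mem _ _ hx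

lemma deltaPow_maps (hΔ0 : Δ (P 0) = 0) (hΔsucc : ∀ n, Δ (P (n + 1)) = P n)
    (k : ℕ) {n : ℕ} {u : H} (hu : u ∈ Wlt P n) : (Δ ^ k) u ∈ Wlt P (n - k) := by
  induction k generalizing u n with
  | zero => simpa using hu
  | succ k ih =>
    have : (Δ ^ (k+1)) u = (Δ ^ k) (Δ u) := by
      rw [pow_succ, Module.End.mul_apply]
    rw [this]
    have := ih (delta_maps hΔ0 hΔsucc hu)
    simpa [Nat.sub_sub, Nat.add_comm] using this

lemma G_maps (hGmap : ∀ n, ∀ u ∈ Wlt P (n + 1), G u ∈ Wlt P (n + 2))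
    {n : ℕ} {u : H} (hu : u ∈ Wlt P n) : G u ∈ Wlt P (n + 1) := by
  cases n with
  | zero => rw [Wlt_zero] at hu; simp at hu; simp [hu, Wlt_zero]
  | succ k => exact hGmap k u hu

lemma Gpow_maps (hGmap : ∀ n, ∀ u ∈ Wlt P (n + 1), G u ∈ Wlt P (n + 2))
    (k : ℕ) {n : ℕ} {u : H} (hu : u ∈ Wlt P n) : (G ^ k) u ∈ Wlt P (n + k) := by
  induction k with
  | zero => simpa using hu
  | succ k ih =>
    have : (G ^ (k+1)) u = G ((G ^ k) u) := by rw [pow_succ', Module.End.mul_apply]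
    rw [this]
    exact G_maps hGmap ih

lemma G_mem_Wtot (hGmap : ∀ n, ∀ u ∈ Wlt P (n + 1), G u ∈ Wlt P (n + 2))
    {u : H} (hu : u ∈ Wtot P) : G u ∈ Wtot P := by
  obtain ⟨n, hn⟩ := exists_Wlt hu
  exact Wlt_le_Wtot P (n+1) (G_maps hGmap hn)

lemma Gpow_mem_Wtot (hGmap : ∀ n, ∀ u ∈ Wlt P (n + 1), G u ∈ Wlt P (n + 2))
    (k : ℕ) {u : H} (hu : u ∈ Wtot P) : (G ^ k) u ∈ Wtot P := by
  induction k with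
  | zero => simpa using hu
  | succ k ih =>
    rw [pow_succ', Module.End.mul_apply]
    exact G_mem_Wtot hGmap ih

lemma Gpow_sym (hGsym : ∀ u ∈ Wtot P, ∀ v ∈ Wtot P, ⟪ G u, v ⟫ = ⟪ u, G v ⟫)
    (hGmap : ∀ n, ∀ u ∈ Wlt P (n + 1), G u ∈ Wlt P (n + 2))
    (k : ℕ) {u v : H} (hu : u ∈ Wtot P) (hv : v ∈ Wtot P) :
    ⟪ (G ^ k) u, v ⟫ = ⟪ u, (G ^ k) v ⟫ := by
  induction k generalizing u with
  | zero => simp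
  | succ k ih =>
    have hc : G ((G ^ k) v) = (G ^ k) (G v) := by
      rw [← Module.End.mul_apply, ← pow_succ', pow_succ, Module.End.mul_apply]
    rw [pow_succ, Module.End.mul_apply, Module.End.mul_apply,
      ih (G_mem_Wtot hGmap hu), hGsym u hu _ (Gpow_mem_Wtot hGmap k hv), hc]

lemma deltaPow_Gpow (hGinv : ∀ u ∈ Wtot P, Δ (G u) = u)
    (hGmap : ∀ n, ∀ u ∈ Wlt P (n + 1), G u ∈ Wlt P (n + 2))
    (ℓ : ℕ) : ∀ m : ℕ, ℓ ≤ m → ∀ u ∈ Wtot P, (Δ ^ ℓ) ((G ^ m) u) = (G ^ (m - ℓ)) u := by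
  induction ℓ with
  | zero => intro m _ u _; simp
  | succ ℓ ih =>
    intro m hm u hu
    obtain ⟨m', rfl⟩ : ∃ m', m = m' + 1 := ⟨m - 1, by omega⟩
    have h1 : (G ^ (m'+1)) u = G ((G ^ m') u) := by rw [pow_succ', Module.End.mul_apply]
    have h2 : (Δ ^ (ℓ+1)) (G ((G ^ m') u)) = (Δ ^ ℓ) (Δ (G ((G ^ m') u))) := by
      rw [pow_succ, Module.End.mul_apply]
    rw [h1, h2, hGinv _ (Gpow_mem_Wtot hGmap m' hu)]
    have := ih m' (by omega) u hu
    simpa [Nat.succ_sub_succ] using this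

end maps

end St17

namespace St17
section inner
variable {P : ℕ → H} {Δ : H →ₗ[ℝ] H} {χ : ℕ → ℝ} {m : ℕ}

lemma innerSm_comm (f g : H) : innerSm Δ χ m f g = innerSm Δ χ m g f := by
  unfold innerSm
  exact Finset.sum_congr rfl fun ℓ _ => by rw [real_inner_comm]

lemma innerSm_add_left (f g h : H) :
    innerSm Δ χ m (f + g) h = innerSm Δ χ m f h + innerSm Δ χ m g h := by
  unfold innerSm
  rw [← Finset.sum_add_distrib]
  exact Finset.sum_congr rfl fun ℓ _ => by rw [map_add, inner_add_left]; ring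

lemma innerSm_smul_left (c : ℝ) (f h : H) :
    innerSm Δ χ m (c • f) h = c * innerSm Δ χ m f h := by
  unfold innerSm
  rw [Finset.mul_sum]
  exact Finset.sum_congr rfl fun ℓ _ => by rw [map_smul, real_inner_smul_left]; ring

lemma innerSm_zero_left (h : H) : innerSm Δ χ m 0 h = 0 := by
  have := innerSm_smul_left (Δ := Δ) (χ := χ) (m := m) 0 0 h
  simpa using this

lemma innerSm_sub_left (f g h : H) :
    innerSm Δ χ m (f - g) h = innerSm Δ χ m f h - innerSm Δ χ m g h := by
  have h1 := innerSm_add_left (Δ := Δ) (χ := χ) (m := m) (f - g) g h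
  rw [sub_add_cancel] at h1
  linarith

lemma innerSm_pos (hχ0 : χ 0 = 1) (hχnn : ∀ ℓ, ℓ ≤ m → 0 ≤ χ ℓ)
    {f : H} (hf : f ≠ 0) : 0 < innerSm Δ χ m f f := by
  unfold innerSm
  apply Finset.sum_pos'
  · intro ℓ hℓ
    exact mul_nonneg (hχnn ℓ (by simpa [Nat.lt_succ_iff] using hℓ)) real_inner_self_nonneg
  · refine ⟨0, Finset.mem_range.2 (Nat.succ_pos m), ?_⟩
    simp only [pow_zero, Module.End.one_apply, hχ0, one_mul]
    exact lt_of_le_of_ne real_inner_self_nonneg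
      (Ne.symm fun h => hf (inner_self_eq_zero.1 h))

lemma innerSm_ne_zero (hχ0 : χ 0 = 1) (hχnn : ∀ ℓ, ℓ ≤ m → 0 ≤ χ ℓ)
    {f : H} (hf : f ≠ 0) : innerSm Δ χ m f f ≠ 0 :=
  ne_of_gt (innerSm_pos hχ0 hχnn hf)

end inner

section st
variable {P : ℕ → H} {Δ : H →ₗ[ℝ] H} {χ : ℕ → ℝ} {m : ℕ} {st : ℕ → H}

lemma st_mem (hstmonic : ∀ n, st n - P n ∈ Wlt P n) (n : ℕ) : st n ∈ Wlt P (n + 1) := by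
  have h1 : st n = (st n - P n) + P n := by abel
  rw [h1]
  exact add_mem (Wlt_mono P (Nat.le_succ n) (hstmonic n)) (mem_Wlt P (Nat.lt_succ_self n))

lemma st_ne_zero (hP : LinearIndependent ℝ P) (hstmonic : ∀ n, st n - P n ∈ Wlt P n)
    (n : ℕ) : st n ≠ 0 := by
  intro h
  apply notMem_Wlt hP n
  have : P n = -(st n - P n) := by rw [h]; abel
  rw [this]
  exact neg_mem (hstmonic n)

lemma st_orth (hstortho : ∀ n, ∀ w ∈ Wlt P n, innerSm Δ χ m (st n) w = 0)
    (hstmonic : ∀ n, st n - P n ∈ Wlt P n)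
    {j k : ℕ} (h : j ≠ k) : innerSm Δ χ m (st j) (st k) = 0 := by
  rcases lt_or_gt_of_ne h with h' | h'
  · rw [innerSm_comm]
    exact hstortho k _ (Wlt_mono P h' (st_mem hstmonic j))
  · exact hstortho j _ (Wlt_mono P h' (st_mem hstmonic k))

lemma Wlt_le_span_st (hstmonic : ∀ n, st n - P n ∈ Wlt P n) (N : ℕ) :
    Wlt P N ≤ Submodule.span ℝ (st '' Set.Iio N) := by
  induction N with
  | zero => rw [Wlt_zero]; exact bot_le
  | succ N ih =>
    rw [Wlt]
    apply Submodule.span_le.2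
    rintro x ⟨j, hj, rfl⟩
    have hmono : Submodule.span ℝ (st '' Set.Iio N) ≤ Submodule.span ℝ (st '' Set.Iio (N+1)) :=
      Submodule.span_mono (Set.image_mono fun x hx => lt_of_lt_of_le hx (Nat.le_succ N))
    rcases Nat.lt_succ_iff_lt_or_eq.1 hj with h | rfl
    · exact hmono (ih (mem_Wlt P h))
    · have h1 : P j = st j - (st j - P j) := by abel
      rw [h1]
      refine sub_mem (Submodule.subset_span ⟨j, Nat.lt_succ_self j, rfl⟩) ?_
      exact hmono (ih (hstmonic j))

lemma expansion (hP : LinearIndependent ℝ P)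
    (hχ0 : χ 0 = 1) (hχnn : ∀ ℓ, ℓ ≤ m → 0 ≤ χ ℓ)
    (hstmonic : ∀ n, st n - P n ∈ Wlt P n)
    (hstortho : ∀ n, ∀ w ∈ Wlt P n, innerSm Δ χ m (st n) w = 0)
    (N : ℕ) {f : H} (hf : f ∈ Wlt P N) :
    f = ∑ j ∈ Finset.range N,
      (innerSm Δ χ m f (st j) / innerSm Δ χ m (st j) (st j)) • st j := by
  have hf' : f ∈ Submodule.span ℝ (st '' Set.Iio N) := Wlt_le_span_st hstmonic N hf
  clear hf
  induction hf' using Submodule.span_induction with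
  | mem x hx =>
    obtain ⟨k, hk, rfl⟩ := hx
    rw [Finset.sum_eq_single k]
    · rw [div_self (innerSm_ne_zero hχ0 hχnn (st_ne_zero hP hstmonic k)), one_smul]
    · intro j hj hjk
      rw [st_orth hstortho hstmonic (Ne.symm hjk), zero_div, zero_smul]
    · intro hk'
      exact absurd (Finset.mem_range.2 hk) hk'
  | zero => simp [innerSm_zero_left]
  | add x y hx hy ihx ihy =>
    conv_lhs => rw [ihx, ihy]
    rw [← Finset.sum_add_distrib]
    exact Finset.sum_congr rfl fun j _ => by
      rw [innerSm_add_left, add_div, add_smul]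
  | smul c x hx ihx =>
    conv_lhs => rw [ihx]
    rw [Finset.smul_sum]
    exact Finset.sum_congr rfl fun j _ => by
      rw [innerSm_smul_left, mul_div_assoc, smul_smul]

end st
end St17

namespace St17
section monic
variable {P : ℕ → H} {Δ G : H →ₗ[ℝ] H}

lemma deltaPow_P (hΔsucc : ∀ n, Δ (P (n + 1)) = P n)
    (ℓ : ℕ) : ∀ k : ℕ, (Δ ^ ℓ) (P (k + ℓ)) = P k := by
  induction ℓ with
  | zero => intro k; simp
  | succ ℓ ih =>
    intro k
    have h1 : (Δ ^ (ℓ+1)) (P (k + (ℓ+1))) = (Δ ^ ℓ) (Δ (P (k + ℓ + 1))) := by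
      rw [pow_succ, Module.End.mul_apply]
      ring_nf
    rw [h1, hΔsucc, ih]

lemma drop_degree (hP : LinearIndependent ℝ P)
    (hΔ0 : Δ (P 0) = 0) (hΔsucc : ∀ n, Δ (P (n + 1)) = P n)
    {N : ℕ} {v : H} (hv : v ∈ Wlt P (N + 2)) (hΔv : Δ v ∈ Wlt P N) :
    v ∈ Wlt P (N + 1) := by
  have himg : P '' Set.Iio (N+2) = insert (P (N+1)) (P '' Set.Iio (N+1)) := by
    rw [show Set.Iio (N+2) = insert (N+1) (Set.Iio (N+1)) from by
      ext x; simp only [Set.mem_Iio, Set.mem_insert_iff]; omega, Set.image_insert_eq]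
  rw [Wlt, himg, Submodule.mem_span_insert] at hv
  obtain ⟨a, z, hz, rfl⟩ := hv
  have hz' : z ∈ Wlt P (N+1) := hz
  by_cases ha : a = 0
  · simpa [ha] using hz'
  · exfalso
    have h1 : Δ (a • P (N+1) + z) = a • P N + Δ z := by
      rw [map_add, map_smul, hΔsucc]
    have h3 : Δ z ∈ Wlt P ((N+1) - 1) := delta_maps hΔ0 hΔsucc hz'
    rw [Nat.add_sub_cancel] at h3
    have h4 : a • P N ∈ Wlt P N := by
      have h2 : a • P N = Δ (a • P (N+1) + z) - Δ z := by rw [h1]; abel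
      rw [h2]; exact sub_mem hΔv h3
    have h5 : P N ∈ Wlt P N := by
      have := Submodule.smul_mem (Wlt P N) a⁻¹ h4
      rwa [smul_smul, inv_mul_cancel₀ ha, one_smul] at this
    exact notMem_Wlt hP N h5

lemma gpow_monic (hP : LinearIndependent ℝ P)
    (hΔ0 : Δ (P 0) = 0) (hΔsucc : ∀ n, Δ (P (n + 1)) = P n)
    (hGinv : ∀ u ∈ Wtot P, Δ (G u) = u)
    (hGmap : ∀ n, ∀ u ∈ Wlt P (n + 1), G u ∈ Wlt P (n + 2))
    (m n : ℕ) {u : H} (humem : u ∈ Wlt P (n + 2))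
    (humonic : u - P (n + 1) ∈ Wlt P (n + 1)) :
    (G ^ m) u - P (n + m + 1) ∈ Wlt P (n + m + 1) := by
  set q : H := (G ^ m) u - P (n + m + 1) with hq
  have hq2 : q ∈ Wlt P (n + m + 2) := by
    apply sub_mem
    · have := Gpow_maps hGmap m humem
      rwa [show n + 2 + m = n + m + 2 from by omega] at this
    · exact mem_Wlt P (by omega)
  have hbase : (Δ ^ m) q = u - P (n + 1) := by
    rw [hq, map_sub, deltaPow_Gpow hGinv hGmap m m le_rfl u (Wlt_le_Wtot P _ humem),
      Nat.sub_self, pow_zero, Module.End.one_apply,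
      show n + m + 1 = (n + 1) + m from by omega, deltaPow_P hΔsucc]
  have claim : ∀ j, j ≤ m → (Δ ^ (m - j)) q ∈ Wlt P (n + 1 + j) := by
    intro j
    induction j with
    | zero => intro _; rw [Nat.sub_zero, hbase]; simpa using humonic
    | succ j ih =>
      intro hj
      have hk : m - j = (m - (j+1)) + 1 := by omega
      have hv : (Δ ^ (m - (j+1))) q ∈ Wlt P ((n + 1 + j) + 2) := by
        have := deltaPow_maps hΔ0 hΔsucc (m - (j+1)) hq2
        rwa [show n + m + 2 - (m - (j+1)) = n + 1 + j + 2 from by omega] at this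
      have hΔv : Δ ((Δ ^ (m - (j+1))) q) ∈ Wlt P (n + 1 + j) := by
        have h1 : Δ ((Δ ^ (m - (j+1))) q) = (Δ ^ (m - j)) q := by
          rw [hk, pow_succ', Module.End.mul_apply]
        rw [h1]; exact ih (by omega)
      have := drop_degree hP hΔ0 hΔsucc hv hΔv
      rwa [show n + 1 + j + 1 = n + 1 + (j + 1) from by omega] at this
  have := claim m le_rfl
  rwa [Nat.sub_self, pow_zero, Module.End.one_apply,
    show n + 1 + m = n + m + 1 from by omega] at this

lemma key_orth {χ : ℕ → ℝ} {m : ℕ} {p : ℕ → H}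
    (hGsym : ∀ u ∈ Wtot P, ∀ v ∈ Wtot P, ⟪ G u, v ⟫ = ⟪ u, G v ⟫)
    (hGinv : ∀ u ∈ Wtot P, Δ (G u) = u)
    (hGmap : ∀ n, ∀ u ∈ Wlt P (n + 1), G u ∈ Wlt P (n + 2))
    (hΔ0 : Δ (P 0) = 0) (hΔsucc : ∀ n, Δ (P (n + 1)) = P n)
    (hpmonic : ∀ n, p n - P n ∈ Wlt P n)
    (hportho : ∀ n, ∀ w ∈ Wlt P n, ⟪ p n, w ⟫ = 0)
    (n : ℕ) {w : H} (hw : w ∈ Wlt P (n + 1 - m)) :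
    innerSm Δ χ m ((G ^ m) (p (n + 1))) w = 0 := by
  unfold innerSm
  apply Finset.sum_eq_zero
  intro ℓ hℓ
  have hℓm : ℓ ≤ m := by simpa [Nat.lt_succ_iff] using hℓ
  have hpmem : p (n+1) ∈ Wlt P (n+2) := st_mem hpmonic (n+1)
  rw [deltaPow_Gpow hGinv hGmap ℓ m hℓm (p (n+1)) (Wlt_le_Wtot P _ hpmem)]
  have h1 : (Δ ^ ℓ) w ∈ Wlt P (n + 1 - m - ℓ) := deltaPow_maps hΔ0 hΔsucc ℓ hw
  by_cases hcase : m + ℓ ≤ n + 1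
  · have h2 : (G ^ (m - ℓ)) ((Δ ^ ℓ) w) ∈ Wlt P (n + 1 - m - ℓ + (m - ℓ)) :=
      Gpow_maps hGmap (m - ℓ) h1
    have h3 : (G ^ (m - ℓ)) ((Δ ^ ℓ) w) ∈ Wlt P (n + 1) :=
      Wlt_mono P (show n + 1 - m - ℓ + (m - ℓ) ≤ n + 1 by omega) h2
    rw [Gpow_sym hGsym hGmap (m - ℓ) (Wlt_le_Wtot P _ hpmem) (Wlt_le_Wtot P _ h1),
      hportho (n+1) _ h3, mul_zero]
  · rw [show n + 1 - m - ℓ = 0 from by omega, Wlt_zero, Submodule.mem_bot] at h1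
    rw [h1, inner_zero_right, mul_zero]

end monic
end St17


/-- Generalized recurrence for higher-order Sobolev orthogonal polynomials:
for every `n ≥ 0`, `𝒢^m p_{n+1} = s̃_{n+m+1} + Σ_{ℓ=0}^{2m-1} a_{n,ℓ} s̃_{n+m-ℓ}`,
terms with negative index being `0`. -/
theorem statement17
    (P : ℕ → H) (hP : LinearIndependent ℝ P)
    (Δ G : H →ₗ[ℝ] H)
    (hΔ0 : Δ (P 0) = 0) (hΔsucc : ∀ n, Δ (P (n + 1)) = P n)
    (hGsym : ∀ u ∈ Wtot P, ∀ v ∈ Wtot P, ⟪ G u, v ⟫ = ⟪ u, G v ⟫)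
    (hGinv : ∀ u ∈ Wtot P, Δ (G u) = u)
    (hGmap : ∀ n, ∀ u ∈ Wlt P (n + 1), G u ∈ Wlt P (n + 2))
    (m : ℕ) (hm : 1 ≤ m)
    (χ : ℕ → ℝ) (hχ0 : χ 0 = 1) (hχnn : ∀ ℓ, ℓ ≤ m → 0 ≤ χ ℓ)
    (p st : ℕ → H)
    (hpmonic : ∀ n, p n - P n ∈ Wlt P n)
    (hportho : ∀ n, ∀ w ∈ Wlt P n, ⟪ p n, w ⟫ = 0)
    (hstmonic : ∀ n, st n - P n ∈ Wlt P n)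
    (hstortho : ∀ n, ∀ w ∈ Wlt P n, innerSm Δ χ m (st n) w = 0) :
    ∀ n : ℕ,
      (G ^ m) (p (n + 1)) = st (n + m + 1) +
        ∑ ℓ ∈ Finset.range (2 * m),
          (if ℓ ≤ n + m then
            (innerSm Δ χ m ((G ^ m) (p (n + 1))) (st (n + m - ℓ)) /
              innerSm Δ χ m (st (n + m - ℓ)) (st (n + m - ℓ))) • st (n + m - ℓ)
          else 0) := by
  intro n
  have hpmem : p (n+1) ∈ Wlt P (n+2) := St17.st_mem hpmonic (n+1)
  have hmon : (G ^ m) (p (n+1)) - P (n + m + 1) ∈ Wlt P (n + m + 1) :=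
    St17.gpow_monic hP hΔ0 hΔsucc hGinv hGmap m n hpmem (hpmonic (n+1))
  have hrmem : (G ^ m) (p (n+1)) - st (n + m + 1) ∈ Wlt P (n + m + 1) := by
    have h : (G ^ m) (p (n+1)) - st (n+m+1)
        = ((G ^ m) (p (n+1)) - P (n+m+1)) - (st (n+m+1) - P (n+m+1)) := by abel
    rw [h]; exact sub_mem hmon (hstmonic _)
  have hexp := St17.expansion hP hχ0 hχnn hstmonic hstortho (n+m+1) hrmem
  have hzero : ∀ j, j + m ≤ n → innerSm Δ χ m ((G ^ m) (p (n+1))) (st j) = 0 := fun j hj =>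
    St17.key_orth hGsym hGinv hGmap hΔ0 hΔsucc hpmonic hportho n
      (St17.Wlt_mono P (show j + 1 ≤ n + 1 - m by omega) (St17.st_mem hstmonic j))
  have hexp' : (G ^ m) (p (n+1)) - st (n+m+1) = ∑ j ∈ Finset.range (n+m+1),
      (innerSm Δ χ m ((G ^ m) (p (n+1))) (st j) / innerSm Δ χ m (st j) (st j)) • st j := by
    rw [hexp]
    refine Finset.sum_congr rfl fun j hj => ?_
    rw [St17.innerSm_sub_left,
      hstortho (n+m+1) _ (St17.Wlt_mono P (Finset.mem_range.1 hj) (St17.st_mem hstmonic j)),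
      sub_zero]
  have hsum : (∑ j ∈ Finset.range (n+m+1),
      (innerSm Δ χ m ((G ^ m) (p (n+1))) (st j) / innerSm Δ χ m (st j) (st j)) • st j)
      = ∑ ℓ ∈ Finset.range (2*m), (if ℓ ≤ n + m then
          (innerSm Δ χ m ((G ^ m) (p (n + 1))) (st (n + m - ℓ)) /
            innerSm Δ χ m (st (n + m - ℓ)) (st (n + m - ℓ))) • st (n + m - ℓ) else 0) := by
    rw [← Finset.sum_filter]
    have hfil : ∑ j ∈ (Finset.range (n+m+1)).filter (fun j => n < j + m),
        (innerSm Δ χ m ((G ^ m) (p (n+1))) (st j) / innerSm Δ χ m (st j) (st j)) • st j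
        = ∑ j ∈ Finset.range (n+m+1),
        (innerSm Δ χ m ((G ^ m) (p (n+1))) (st j) / innerSm Δ χ m (st j) (st j)) • st j := by
      apply Finset.sum_filter_of_ne
      intro x hx hxne
      by_contra hc
      exact hxne (by rw [hzero x (by omega), zero_div, zero_smul])
    rw [← hfil]
    refine Finset.sum_nbij' (fun j => n + m - j) (fun ℓ => n + m - ℓ) ?_ ?_ ?_ ?_ ?_
    · intro a ha; simp only [Finset.mem_filter, Finset.mem_range] at ha ⊢; omega
    · intro a ha; simp only [Finset.mem_filter, Finset.mem_range] at ha ⊢; omega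
    · intro a ha; simp only [Finset.mem_filter, Finset.mem_range] at ha
      show n + m - (n + m - a) = a; omega
    · intro a ha; simp only [Finset.mem_filter, Finset.mem_range] at ha
      show n + m - (n + m - a) = a; omega
    · intro a ha
      simp only [Finset.mem_filter, Finset.mem_range] at ha
      rw [show n + m - (n + m - a) = a from by omega]
  calc (G ^ m) (p (n+1)) = st (n+m+1) + ((G ^ m) (p (n+1)) - st (n+m+1)) := by abel
    _ = _ := by rw [hexp', hsum]
end

section
/- Suppose there exist continuous maps γ, η : [0,1] → X with images contained in I such that γ(0) = η(1), γ(1) = η(0), γ(0) ≠ γ(1), and γ(t) ≠ η(t) for every t ∈ (0,1); suppose also there exist d − 2 pairwise distinct points x₃,…,x_d ∈ I, none of which lies on the image of γ or of η. Then I is not interpolatory; that is, there exists an injective d-tuple of points of I at which the matrix (g_j(x_i))_{1≤i,j≤d} has zero determinant. -/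
/-- `X` a topological space, `d ≥ 2`, `g₁,…,g_d : X → ℝ` continuous. If `I ⊆ X`
contains the images of two continuous paths `γ, η : [0,1] → X` with
`γ(0) = η(1)`, `γ(1) = η(0)`, `γ(0) ≠ γ(1)`, `γ(t) ≠ η(t)` for `t ∈ (0,1)`,
together with `d − 2` further pairwise distinct points avoiding both paths,
then `I` is not interpolatory: there is an injective `d`-tuple of points of `I`
at which the matrix `(g_j(x_i))` has zero determinant. -/
theorem statement19 {X : Type*} [TopologicalSpace X]
    (d : ℕ) (hd : 2 ≤ d)
    (g : Fin d → X → ℝ) (hg : ∀ j, Continuous (g j))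
    (I : Set X)
    (γ η : ℝ → X)
    (hγc : ContinuousOn γ (Set.Icc 0 1)) (hηc : ContinuousOn η (Set.Icc 0 1))
    (hγI : ∀ t ∈ Set.Icc (0 : ℝ) 1, γ t ∈ I)
    (hηI : ∀ t ∈ Set.Icc (0 : ℝ) 1, η t ∈ I)
    (hend1 : γ 0 = η 1) (hend2 : γ 1 = η 0)
    (hne : γ 0 ≠ γ 1)
    (hsep : ∀ t ∈ Set.Ioo (0 : ℝ) 1, γ t ≠ η t)
    (x : Fin (d - 2) → X)
    (hxinj : Function.Injective x)
    (hxI : ∀ i, x i ∈ I)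
    (hxγ : ∀ i, ∀ t ∈ Set.Icc (0 : ℝ) 1, x i ≠ γ t)
    (hxη : ∀ i, ∀ t ∈ Set.Icc (0 : ℝ) 1, x i ≠ η t) :
    ∃ y : Fin d → X, Function.Injective y ∧ (∀ i, y i ∈ I) ∧
      Matrix.det (Matrix.of fun i j => g j (y i)) = 0 := by
  classical
  have hd0 : 0 < d := by omega
  have hd1 : 1 < d := by omega
  set i0 : Fin d := ⟨0, hd0⟩ with hi0
  set i1 : Fin d := ⟨1, hd1⟩ with hi1
  have hi01 : i0 ≠ i1 := by
    intro h; exact absurd (congrArg Fin.val h) (by simp [hi0, hi1])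
  let Y : ℝ → Fin d → X := fun t i =>
    if h0 : (i : ℕ) = 0 then γ t
    else if h1 : (i : ℕ) = 1 then η t
    else x ⟨(i : ℕ) - 2, by omega⟩
  let F : ℝ → ℝ := fun t => Matrix.det (Matrix.of fun i j => g j (Y t i))
  have hFc : ContinuousOn F (Set.Icc 0 1) := by
    have hdet : Continuous fun A : Matrix (Fin d) (Fin d) ℝ => A.det :=
      Continuous.matrix_det continuous_id
    apply hdet.comp_continuousOn
    apply continuousOn_pi.2
    intro i
    apply continuousOn_pi.2
    intro j
    simp only [Matrix.of_apply, Y]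
    split_ifs with h0 h1
    · exact (hg j).comp_continuousOn hγc
    · exact (hg j).comp_continuousOn hηc
    · exact continuousOn_const
  have hswap : F 1 = - F 0 := by
    have key : (Matrix.of fun i j => g j (Y 1 i)) =
        (Matrix.of fun i j => g j (Y 0 i)).submatrix (Equiv.swap i0 i1) id := by
      ext i j
      simp only [Matrix.of_apply, Matrix.submatrix_apply, id_eq, Y]
      rcases eq_or_ne i i0 with h | h
      · subst h
        rw [Equiv.swap_apply_left]
        simp [hi0, hi1, hend2]
      rcases eq_or_ne i i1 with h' | h'
      · subst h'
        rw [Equiv.swap_apply_right]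
        simp [hi0, hi1, hend1]
      · rw [Equiv.swap_apply_of_ne_of_ne h h']
        have h0' : (i : ℕ) ≠ 0 := fun e => h (Fin.ext (by simp [hi0, e]))
        have h1' : (i : ℕ) ≠ 1 := fun e => h' (Fin.ext (by simp [hi1, e]))
        simp only [dif_neg h0', dif_neg h1']
    have hperm := Matrix.det_permute (Equiv.swap i0 i1)
      (Matrix.of fun i j => g j (Y 0 i))
    simp only [F]
    rw [key, hperm, Equiv.Perm.sign_swap hi01]
    push_cast
    ring
  have hmem : (0 : ℝ) ∈ Set.uIcc (F 0) (F 1) := by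
    rw [hswap, Set.mem_uIcc]
    rcases le_total (F 0) 0 with h | h
    · left; constructor <;> linarith
    · right; constructor <;> linarith
  have hIcc : Set.uIcc (0 : ℝ) 1 = Set.Icc 0 1 := Set.uIcc_of_le zero_le_one
  have hiv := intermediate_value_uIcc (f := F) (a := (0 : ℝ)) (b := 1)
    (by rw [hIcc]; exact hFc)
  obtain ⟨t, ht, hFt⟩ := hiv hmem
  rw [hIcc] at ht
  have hγη : γ t ≠ η t := by
    rcases eq_or_lt_of_le ht.1 with h | h
    · rw [← h]; rw [hend2] at hne; exact hne
    rcases eq_or_lt_of_le ht.2 with h' | h'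
    · rw [h']; rw [hend1] at hne; exact fun e => hne e.symm
    · exact hsep t ⟨h, h'⟩
  refine ⟨Y t, ?_, ?_, hFt⟩
  · intro a b hab
    simp only [Y] at hab
    split_ifs at hab
    all_goals first
      | exact absurd hab hγη
      | exact absurd hab.symm hγη
      | exact absurd hab (hxγ _ t ht)
      | exact absurd hab.symm (hxγ _ t ht)
      | exact absurd hab (hxη _ t ht)
      | exact absurd hab.symm (hxη _ t ht)
      | exact Fin.ext (by omega)
      | (have h := congrArg Fin.val (hxinj hab); exact Fin.ext (by simp at h; omega))
  · intro i
    simp only [Y]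
    split_ifs
    · exact hγI t ht
    · exact hηI t ht
    · exact hxI _
end
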